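/- For any nonzero vector x in ℂ^n with n ≥ 2, there exists a finite product A of complex Givens-type rotation matrices H(i,j,θ,φ,ψ,δ) such that A x = ‖x‖ • e₁, where e₁ is the first standard basis vector. -/

import Mathlib

open Complex Matrix


lemma exp_neg_arg_mul (a : ℂ) :
    Complex.exp (Complex.I * ((-Complex.arg a : ℝ) : ℂ)) * a = (‖a‖ : ℂ) := by
  have h := Complex.norm_mul_exp_arg_mul_I a
  calc Complex.exp (Complex.I * ((-Complex.arg a : ℝ) : ℂ)) * a
      = Complex.exp (Complex.I * ((-Complex.arg a : ℝ) : ℂ)) *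
        ((‖a‖ : ℂ) * Complex.exp ((Complex.arg a : ℂ) * Complex.I)) := by rw [h]
    _ = (‖a‖ : ℂ) *
        (Complex.exp ((Complex.arg a : ℂ) * Complex.I))⁻¹ *
        Complex.exp ((Complex.arg a : ℂ) * Complex.I) := by
        rw [show Complex.I * ((-Complex.arg a : ℝ) : ℂ) = -((Complex.arg a : ℂ) * Complex.I) by
          push_cast; ring, Complex.exp_neg]; ring
    _ = (‖a‖ : ℂ) := by
        rw [mul_assoc, inv_mul_cancel₀ (Complex.exp_ne_zero _), mul_one]

lemma rotate2 (a b : ℂ) : ∃ θ ψ δ : ℝ,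
    Complex.exp (Complex.I * ψ) * Real.cos θ * a + Complex.exp (Complex.I * δ) * Real.sin θ * b
      = (Real.sqrt (‖a‖ ^ 2 + ‖b‖ ^ 2) : ℂ) ∧
    -(Complex.exp (-(Complex.I * δ)) * Real.sin θ) * a
      + Complex.exp (-(Complex.I * ψ)) * Real.cos θ * b = 0 := by
  by_cases h0 : ‖a‖ ^ 2 + ‖b‖ ^ 2 = 0
  · have ha : a = 0 := by
      have h1 := norm_nonneg a; have h2 := norm_nonneg b
      have : ‖a‖ = 0 := by nlinarith
      simpa using this
    have hb : b = 0 := by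
      have h1 := norm_nonneg a; have h2 := norm_nonneg b
      have : ‖b‖ = 0 := by nlinarith
      simpa using this
    exact ⟨0, 0, 0, by simp [ha, hb], by simp [ha, hb]⟩
  · set r := Real.sqrt (‖a‖ ^ 2 + ‖b‖ ^ 2) with hr
    have hsum : (0:ℝ) ≤ ‖a‖ ^ 2 + ‖b‖ ^ 2 := by positivity
    have hrpos : 0 < r := Real.sqrt_pos.mpr (lt_of_le_of_ne hsum (Ne.symm h0))
    have hr2 : r ^ 2 = ‖a‖ ^ 2 + ‖b‖ ^ 2 := Real.sq_sqrt hsum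
    have hne : (r:ℝ) ^ 2 ≠ 0 := by positivity
    have hble : ‖b‖ / r ≤ 1 := by
      rw [div_le_one hrpos]
      nlinarith [norm_nonneg a, norm_nonneg b, hrpos]
    have hs : Real.sin (Real.arcsin (‖b‖ / r)) = ‖b‖ / r :=
      Real.sin_arcsin (le_trans (by norm_num) (by positivity : (0:ℝ) ≤ ‖b‖ / r)) hble
    have hc : Real.cos (Real.arcsin (‖b‖ / r)) = ‖a‖ / r := by
      rw [Real.cos_arcsin]
      rw [show 1 - (‖b‖ / r) ^ 2 = (‖a‖ / r) ^ 2 by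
        rw [div_pow, div_pow, eq_div_iff hne, sub_mul, one_mul, div_mul_cancel₀ _ hne]
        linarith [hr2]]
      exact Real.sqrt_sq (by positivity)
    refine ⟨Real.arcsin (‖b‖ / r), -Complex.arg a, -Complex.arg b, ?_, ?_⟩
    · rw [hs, hc]
      rw [show Complex.exp (Complex.I * ((-Complex.arg a : ℝ) : ℂ)) * ((‖a‖/r : ℝ) : ℂ) * a
            = ((‖a‖/r : ℝ) : ℂ) * (Complex.exp (Complex.I * ((-Complex.arg a : ℝ) : ℂ)) * a) from by
          ring]
      rw [show Complex.exp (Complex.I * ((-Complex.arg b : ℝ) : ℂ)) * ((‖b‖/r : ℝ) : ℂ) * b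
            = ((‖b‖/r : ℝ) : ℂ) * (Complex.exp (Complex.I * ((-Complex.arg b : ℝ) : ℂ)) * b) from by
          ring]
      rw [exp_neg_arg_mul a, exp_neg_arg_mul b]
      have hreal : ‖a‖ / r * ‖a‖ + ‖b‖ / r * ‖b‖ = r := by
        rw [div_mul_eq_mul_div, div_mul_eq_mul_div, ← add_div,
          div_eq_iff hrpos.ne']
        nlinarith [hr2]
      push_cast
      exact_mod_cast congrArg (fun t : ℝ => (t : ℂ)) hreal
    · rw [hs, hc]
      rw [show -(Complex.I * ((-Complex.arg b : ℝ) : ℂ)) = (Complex.arg b : ℂ) * Complex.I from by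
        push_cast; ring]
      rw [show -(Complex.I * ((-Complex.arg a : ℝ) : ℂ)) = (Complex.arg a : ℂ) * Complex.I from by
        push_cast; ring]
      have ha' : a = (‖a‖ : ℂ) * Complex.exp ((Complex.arg a : ℂ) * Complex.I) := by
        exact (Complex.norm_mul_exp_arg_mul_I a).symm
      have hb' : b = (‖b‖ : ℂ) * Complex.exp ((Complex.arg b : ℂ) * Complex.I) := by
        exact (Complex.norm_mul_exp_arg_mul_I b).symm
      set A := Complex.exp ((Complex.arg a : ℂ) * Complex.I) with hA
      set B := Complex.exp ((Complex.arg b : ℂ) * Complex.I) with hB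
      push_cast
      linear_combination (-(B * ((‖b‖ : ℂ) / (r : ℂ)))) * ha' + (A * ((‖a‖ : ℂ) / (r : ℂ))) * hb'


noncomputable def Hmat (n : ℕ) (i j : Fin n) (θ φ ψ δ : ℝ) :
    Matrix (Fin n) (Fin n) ℂ := fun k l =>
  if k = i ∧ l = i then Complex.exp (Complex.I * φ / 2) * Complex.exp (Complex.I * ψ) * Real.cos θ
  else if k = i ∧ l = j then Complex.exp (Complex.I * φ / 2) * Complex.exp (Complex.I * δ) * Real.sin θ
  else if k = j ∧ l = i then -(Complex.exp (Complex.I * φ / 2) * Complex.exp (-(Complex.I * δ)) * Real.sin θ)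
  else if k = j ∧ l = j then Complex.exp (Complex.I * φ / 2) * Complex.exp (-(Complex.I * ψ)) * Real.cos θ
  else if k = l then 1 else 0

lemma Hmat_mulVec (n : ℕ) (i j : Fin n) (hij : i ≠ j) (θ ψ δ : ℝ) (v : Fin n → ℂ) :
    (Hmat n i j θ 0 ψ δ).mulVec v = fun k =>
      if k = i then
        Complex.exp (Complex.I * ψ) * Real.cos θ * v i
          + Complex.exp (Complex.I * δ) * Real.sin θ * v j
      else if k = j then
        -(Complex.exp (-(Complex.I * δ)) * Real.sin θ) * v i
          + Complex.exp (-(Complex.I * ψ)) * Real.cos θ * v j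
      else v k := by
  have hexp : Complex.exp (Complex.I * ((0:ℝ):ℂ) / 2) = 1 := by norm_num
  funext k
  show ∑ l, Hmat n i j θ 0 ψ δ k l * v l = _
  by_cases hki : k = i
  · subst hki
    rw [Fintype.sum_eq_add k j hij ?_]
    · simp [Hmat, hexp, hij, Ne.symm hij]
    · intro l ⟨hl1, hl2⟩
      simp [Hmat, hexp, hij, hl1, hl2, Ne.symm hl1, Ne.symm hl2]
  · by_cases hkj : k = j
    · subst hkj
      rw [Fintype.sum_eq_add i k (Ne.symm hki) ?_]
      · simp [Hmat, hexp, hki, Ne.symm hki, hij, Ne.symm hij]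
      · intro l ⟨hl1, hl2⟩
        simp [Hmat, hexp, hki, hl1, hl2, Ne.symm hl1, Ne.symm hl2]
    · rw [Fintype.sum_eq_single k ?_]
      · simp [Hmat, hki, hkj]
      · intro l hl
        simp [Hmat, hki, hkj, Ne.symm hl, hl.symm]


theorem stmt_0 (n : ℕ) (hn : 2 ≤ n) (x : Fin n → ℂ) (hx : x ≠ 0) :
    ∃ L : List (Matrix (Fin n) (Fin n) ℂ),
      (∀ M ∈ L, ∃ (i j : Fin n) (θ φ ψ δ : ℝ), i < j ∧ M = Hmat n i j θ φ ψ δ) ∧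
      L.prod.mulVec x =
        fun k => if k = (⟨0, by omega⟩ : Fin n) then (Real.sqrt (∑ i, ‖x i‖ ^ 2) : ℂ) else 0 := by
  set S : ℕ → ℝ := fun m => ∑ i ∈ Finset.univ.filter (fun i : Fin n => (i : ℕ) < m), ‖x i‖ ^ 2
    with hS
  have hSnonneg : ∀ m, 0 ≤ S m := fun m =>
    Finset.sum_nonneg (fun i _ => by positivity)
  have hSsucc : ∀ m (hm : m < n), S (m + 1) = S m + ‖x ⟨m, hm⟩‖ ^ 2 := by
    intro m hm
    have hfil : Finset.univ.filter (fun i : Fin n => (i : ℕ) < m + 1)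
        = insert (⟨m, hm⟩ : Fin n) (Finset.univ.filter (fun i : Fin n => (i : ℕ) < m)) := by
      ext i
      simp only [Finset.mem_filter, Finset.mem_insert, Finset.mem_univ, true_and, Fin.ext_iff]
      omega
    rw [hS]
    simp only [hfil]
    rw [Finset.sum_insert (by simp)]
    ring
  have hS2 : S 2 = ‖x ⟨0, by omega⟩‖ ^ 2 + ‖x ⟨1, by omega⟩‖ ^ 2 := by
    have h1 : S 1 = ‖x ⟨0, by omega⟩‖ ^ 2 := by
      rw [hS]
      simp only
      rw [show Finset.univ.filter (fun i : Fin n => (i : ℕ) < 1) = {(⟨0, by omega⟩ : Fin n)} by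
        ext i
        simp only [Finset.mem_filter, Finset.mem_singleton, Finset.mem_univ, true_and,
          Fin.ext_iff]
        omega]
      simp
    rw [hSsucc 1 (by omega), h1]
  have key : ∀ m, 2 ≤ m → m ≤ n → ∃ L : List (Matrix (Fin n) (Fin n) ℂ),
      (∀ M ∈ L, ∃ (i j : Fin n) (θ φ ψ δ : ℝ), i < j ∧ M = Hmat n i j θ φ ψ δ) ∧
      L.prod.mulVec x =
        fun k : Fin n => if (k : ℕ) = 0 then ((Real.sqrt (S m) : ℝ) : ℂ)
          else if (k : ℕ) < m then 0 else x k := by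
    intro m hm
    induction m, hm using Nat.le_induction with
    | base =>
      intro hn2
      obtain ⟨θ, ψ, δ, h1, h2⟩ := rotate2 (x ⟨0, by omega⟩) (x ⟨1, by omega⟩)
      have hij : (⟨0, by omega⟩ : Fin n) ≠ ⟨1, by omega⟩ := by
        simp [Fin.ext_iff]
      refine ⟨[Hmat n ⟨0, by omega⟩ ⟨1, by omega⟩ θ 0 ψ δ], ?_, ?_⟩
      · intro M hM
        simp only [List.mem_singleton] at hM
        exact ⟨⟨0, by omega⟩, ⟨1, by omega⟩, θ, 0, ψ, δ, by simp, hM⟩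
      · rw [List.prod_cons, List.prod_nil, mul_one, Hmat_mulVec n _ _ hij]
        funext k
        by_cases hk0 : (k : ℕ) = 0
        · have hk : k = ⟨0, by omega⟩ := by simp [Fin.ext_iff, hk0]
          rw [hk, if_pos rfl, if_pos rfl, h1, hS2]
        · have hk0' : k ≠ ⟨0, by omega⟩ := by simp [Fin.ext_iff, hk0]
          rw [if_neg hk0', if_neg hk0]
          by_cases hk1 : (k : ℕ) = 1
          · have hk : k = ⟨1, by omega⟩ := by simp [Fin.ext_iff, hk1]
            rw [hk, if_pos rfl, if_pos (by norm_num), h2]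
          · have hk1' : k ≠ ⟨1, by omega⟩ := by simp [Fin.ext_iff, hk1]
            rw [if_neg hk1', if_neg (by omega)]
    | succ m hm ih =>
      intro hmn
      obtain ⟨L, hL, hLv⟩ := ih (by omega)
      have hmn' : m < n := by omega
      set i0 : Fin n := ⟨0, by omega⟩ with hi0
      set jm : Fin n := ⟨m, hmn'⟩ with hjm
      set v : Fin n → ℂ := L.prod.mulVec x with hv
      have hvi0 : v i0 = ((Real.sqrt (S m) : ℝ) : ℂ) := by
        have h := congrFun hLv i0
        beta_reduce at h
        rwa [if_pos (by simp [hi0])] at h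
      have hvjm : v jm = x jm := by
        have h := congrFun hLv jm
        beta_reduce at h
        rwa [if_neg (by simp [hjm]; omega), if_neg (by simp [hjm])] at h
      obtain ⟨θ, ψ, δ, h1, h2⟩ := rotate2 (v i0) (v jm)
      have hij : i0 ≠ jm := by simp [hi0, hjm, Fin.ext_iff]; omega
      have hnorm : ‖v i0‖ ^ 2 = S m := by
        rw [hvi0]
        rw [Complex.norm_real, Real.norm_eq_abs, _root_.abs_of_nonneg (Real.sqrt_nonneg _)]
        exact Real.sq_sqrt (hSnonneg m)
      refine ⟨Hmat n i0 jm θ 0 ψ δ :: L, ?_, ?_⟩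
      · intro M hM
        rcases List.mem_cons.mp hM with h | h
        · exact ⟨i0, jm, θ, 0, ψ, δ, by simp [hi0, hjm, Fin.lt_def]; omega, h⟩
        · exact hL M h
      · rw [List.prod_cons, ← Matrix.mulVec_mulVec, ← hv, Hmat_mulVec n _ _ hij]
        funext k
        by_cases hk0 : (k : ℕ) = 0
        · have hk : k = i0 := by simp [hi0, Fin.ext_iff, hk0]
          rw [hk, if_pos rfl, if_pos (by simp [hi0]), h1, hnorm, hvjm]
          rw [hSsucc m hmn']
        · have hk0' : k ≠ i0 := by simp [hi0, Fin.ext_iff, hk0]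
          rw [if_neg hk0', if_neg hk0]
          by_cases hkm : (k : ℕ) = m
          · have hk : k = jm := by simp [hjm, Fin.ext_iff, hkm]
            rw [hk, if_pos rfl, if_pos (by simp [hjm]), h2]
          · have hkm' : k ≠ jm := by simp [hjm, Fin.ext_iff, hkm]
            rw [if_neg hkm']
            have h := congrFun hLv k
            beta_reduce at h
            rw [if_neg hk0] at h
            rw [h]
            by_cases hlt : (k : ℕ) < m
            · rw [if_pos hlt, if_pos (by omega)]
            · rw [if_neg hlt, if_neg (by omega)]
  obtain ⟨L, hL, hLv⟩ := key n hn le_rfl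
  refine ⟨L, hL, ?_⟩
  rw [hLv]
  funext k
  by_cases hk0 : (k : ℕ) = 0
  · rw [if_pos hk0, if_pos (by simp [Fin.ext_iff, hk0])]
    congr 2
    rw [hS]
    simp only
    rw [show Finset.univ.filter (fun i : Fin n => (i : ℕ) < n) = Finset.univ by
      ext i; simp [i.isLt]]
  · rw [if_neg hk0, if_pos k.isLt, if_neg (by simp [Fin.ext_iff, hk0])]
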